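/- arXiv:1808.02336 — 4 statements merged into one kernel-verified Lean document; each statement's English description precedes it below -/
import Mathlib

section
/- Let X ~ Bin(n, s) and Y ~ Bin(n-1, s) for n ≥ 1 and s ∈ (0,1). Then for each k ∈ {0, …, n}, |P[X = k] − P[Y = k]| = (|ns − k| / (n(1−s))) · P[X = k]. -/
/-- The binomial probability mass function: `P[Bin(n,s) = k]`. -/
noncomputable def binomPMF (n : ℕ) (s : ℝ) (k : ℕ) : ℝ :=
  (n.choose k : ℝ) * s ^ k * (1 - s) ^ (n - k)

theorem binom_diff_ratio (n : ℕ) (hn : 1 ≤ n) (s : ℝ) (hs : s ∈ Set.Ioo (0:ℝ) 1)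
    (k : ℕ) (hk : k ≤ n) :
    |binomPMF n s k - binomPMF (n - 1) s k|
      = (|n * s - k| / (n * (1 - s))) * binomPMF n s k := by
  obtain ⟨hs0, hs1⟩ := hs
  have h1s : (0:ℝ) < 1 - s := by linarith
  obtain ⟨m, rfl⟩ : ∃ m, n = m + 1 := ⟨n - 1, (Nat.succ_pred_eq_of_pos hn).symm⟩
  have hm1 : (0:ℝ) < (m:ℝ) + 1 := by positivity
  have hP : 0 ≤ binomPMF (m+1) s k := by
    unfold binomPMF; positivity
  simp only [Nat.add_sub_cancel]
  rcases eq_or_lt_of_le hk with rfl | hk'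
  · have h0 : binomPMF m s (m+1) = 0 := by
      unfold binomPMF
      simp [Nat.choose_eq_zero_of_lt (Nat.lt_succ_self m)]
    rw [h0, sub_zero, abs_of_nonneg hP]
    have habs : |((m:ℝ)+1) * s - ((m:ℝ)+1)| = ((m:ℝ)+1) * (1 - s) := by
      rw [abs_of_nonpos (by nlinarith)]; ring
    push_cast [habs]
    rw [div_self (by positivity), one_mul]
  · -- k < m + 1, i.e. k ≤ m
    have hkm : k ≤ m := Nat.lt_succ_iff.mp hk'
    have hchoose : (m.choose k : ℝ) * ((m:ℝ) + 1) =
        ((m+1).choose k : ℝ) * (((m:ℝ) + 1) - k) := by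
      have := Nat.choose_mul_succ_eq m k
      have hcast : ((m.choose k * (m + 1) : ℕ) : ℝ)
          = (((m + 1).choose k * (m + 1 - k) : ℕ) : ℝ) := by rw [this]
      push_cast [Nat.cast_sub (by omega : k ≤ m + 1)] at hcast
      linarith [hcast]
    have hexp : (1 - s) ^ (m + 1 - k) = (1 - s) * (1 - s) ^ (m - k) := by
      rw [show m + 1 - k = (m - k) + 1 by omega, pow_succ]; ring
    have key : binomPMF (m+1) s k - binomPMF m s k
        = (((k:ℝ) - ((m:ℝ)+1) * s) / (((m:ℝ)+1) * (1 - s))) * binomPMF (m+1) s k := by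
      unfold binomPMF
      rw [hexp]
      have hmc : (m.choose k : ℝ) = ((m+1).choose k : ℝ) * (((m:ℝ) + 1) - k) / ((m:ℝ)+1) := by
        field_simp at hchoose ⊢
        linarith [hchoose]
      rw [hmc]
      field_simp
      ring
    rw [key, abs_mul, abs_of_nonneg hP, abs_div,
      abs_of_pos (by positivity : (0:ℝ) < ((m:ℝ)+1) * (1 - s)), abs_sub_comm]
    push_cast
    ring
end

section
/- Let X ~ Bin(n, s) and Y ~ Bin(n-1, s) for n ≥ 1 and s ∈ (0,1). Then the total variation distance between the laws of X and Y is at most sqrt(s / (4n(1−s))). -/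
open Finset

lemma binomPMF_pos {s : ℝ} (hs : s ∈ Set.Ioo (0:ℝ) 1) {n k : ℕ} (hk : k ≤ n) :
    0 < binomPMF n s k := by
  have h1 : (0:ℝ) < s := hs.1
  have h2 : (0:ℝ) < 1 - s := by have := hs.2; linarith
  have h3 : 0 < (n.choose k : ℝ) := by exact_mod_cast Nat.choose_pos hk
  unfold binomPMF; positivity

lemma binomPMF_zero {n k : ℕ} (s : ℝ) (hk : n < k) : binomPMF n s k = 0 := by
  simp [binomPMF, Nat.choose_eq_zero_of_lt hk]

lemma sum_binomPMF (n : ℕ) (s : ℝ) :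
    ∑ k ∈ range (n+1), binomPMF n s k = 1 := by
  calc ∑ k ∈ range (n+1), binomPMF n s k
      = ∑ k ∈ range (n+1), s ^ k * (1-s) ^ (n-k) * (n.choose k : ℝ) := by
        refine Finset.sum_congr rfl fun k _ => ?_; unfold binomPMF; ring
    _ = (s + (1-s)) ^ n := (add_pow s (1-s) n).symm
    _ = 1 := by rw [show s + (1-s) = 1 by ring, one_pow]

lemma mean_binomPMF (m : ℕ) (s : ℝ) :
    ∑ k ∈ range (m+1), (k:ℝ) * binomPMF m s k = m * s := by
  cases m with
  | zero => simp
  | succ m' =>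
    rw [Finset.sum_range_succ']
    have key : ∀ i ∈ range (m'+1), ((i+1 : ℕ):ℝ) * binomPMF (m'+1) s (i+1)
        = ((m'+1 : ℕ):ℝ) * s * binomPMF m' s i := by
      intro i _
      unfold binomPMF
      have hc : (m'+1) * m'.choose i = (m'+1).choose (i+1) * (i+1) :=
        Nat.add_one_mul_choose_eq m' i
      have hc' : ((m'+1):ℝ) * (m'.choose i : ℝ) = ((m'+1).choose (i+1) : ℝ) * ((i:ℝ)+1) := by
        exact_mod_cast hc
      have hsub : m' + 1 - (i+1) = m' - i := by omega
      rw [hsub, pow_succ]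
      push_cast
      linear_combination (-(s^i * s * (1-s)^(m'-i))) * hc'
    rw [Finset.sum_congr rfl key]
    rw [← Finset.mul_sum, sum_binomPMF]
    push_cast
    ring

lemma chi_term {s : ℝ} (hs : s ∈ Set.Ioo (0:ℝ) 1) {m k : ℕ} (hk : k ≤ m) :
    (binomPMF m s k)^2 / binomPMF (m+1) s k
      = (((m:ℝ)+1-k)/(((m:ℝ)+1)*(1-s))) * binomPMF m s k := by
  have hq : binomPMF (m+1) s k ≠ 0 := ne_of_gt (binomPMF_pos hs (by omega))
  rw [div_eq_iff hq]
  obtain ⟨j, rfl⟩ : ∃ j, m = k + j := ⟨m - k, by omega⟩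
  have hc : (k+j).choose k * (k+j+1) = (k+j+1).choose k * (j+1) := by
    have := Nat.choose_mul_succ_eq (k+j) k
    rwa [show k+j+1-k = j+1 by omega] at this
  have hc' : ((k+j).choose k : ℝ) * ((k:ℝ)+j+1) = ((k+j+1).choose k : ℝ) * ((j:ℝ)+1) := by
    exact_mod_cast hc
  unfold binomPMF
  rw [show k+j-k = j by omega, show k+j+1-k = j+1 by omega]
  have hs1 : (1:ℝ) - s ≠ 0 := by have := hs.2; intro h; linarith
  have hne : (((k:ℝ)+(j:ℝ)+1)*(1-s)) ≠ 0 := by positivity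
  push_cast
  rw [div_mul_eq_mul_div, div_mul_eq_mul_div, eq_div_iff hne]
  linear_combination (((k+j).choose k : ℝ) * s^k * s^k * (1-s)^j * (1-s)^j * (1-s)) * hc'

/-- Total variation distance between the laws of `Bin(n,s)` and `Bin(n-1,s)`. -/
theorem binom_tv_le (n : ℕ) (hn : 1 ≤ n) (s : ℝ) (hs : s ∈ Set.Ioo (0:ℝ) 1) :
    (1 / 2) * ∑' k : ℕ, |binomPMF n s k - binomPMF (n - 1) s k|
      ≤ Real.sqrt (s / (4 * n * (1 - s))) := by
  obtain ⟨m, rfl⟩ : ∃ m, n = m + 1 := ⟨n - 1, by omega⟩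
  have hm1 : (m + 1 : ℕ) - 1 = m := by omega
  rw [hm1]
  have hspos : (0:ℝ) < s := hs.1
  have h1s : (0:ℝ) < 1 - s := by have := hs.2; linarith
  -- reduce tsum to finite sum
  have htsum : ∑' k : ℕ, |binomPMF (m+1) s k - binomPMF m s k|
      = ∑ k ∈ range (m+2), |binomPMF (m+1) s k - binomPMF m s k| := by
    apply tsum_eq_sum
    intro k hk
    rw [Finset.mem_range, not_lt] at hk
    rw [binomPMF_zero s (by omega), binomPMF_zero s (by omega)]
    simp
  rw [htsum]
  -- the second-moment-type sum
  have hsum_p2q : ∑ k ∈ range (m+2), (binomPMF m s k)^2 / binomPMF (m+1) s k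
      = ((m:ℝ)+1 - m*s) / (((m:ℝ)+1)*(1-s)) := by
    rw [Finset.sum_range_succ]
    have hlast : binomPMF m s (m+1) = 0 := binomPMF_zero s (by omega)
    rw [hlast]
    have hterms : ∀ k ∈ range (m+1), (binomPMF m s k)^2 / binomPMF (m+1) s k
        = (1/(((m:ℝ)+1)*(1-s))) * (((m:ℝ)+1) * binomPMF m s k - (k:ℝ) * binomPMF m s k) := by
      intro k hk
      rw [Finset.mem_range] at hk
      rw [chi_term hs (by omega)]
      ring
    rw [Finset.sum_congr rfl hterms, ← Finset.mul_sum]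
    rw [Finset.sum_sub_distrib, ← Finset.mul_sum, sum_binomPMF, mean_binomPMF]
    have hne : ((m:ℝ)+1)*(1-s) ≠ 0 := by positivity
    field_simp
    simp
  -- chi-square value
  have hchi : ∑ k ∈ range (m+2), (binomPMF (m+1) s k - binomPMF m s k)^2 / binomPMF (m+1) s k
      = s / (((m:ℝ)+1)*(1-s)) := by
    have hterms : ∀ k ∈ range (m+2),
        (binomPMF (m+1) s k - binomPMF m s k)^2 / binomPMF (m+1) s k
        = (binomPMF (m+1) s k - 2 * binomPMF m s k)
          + (binomPMF m s k)^2 / binomPMF (m+1) s k := by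
      intro k hk
      rw [Finset.mem_range] at hk
      have hqk : binomPMF (m+1) s k ≠ 0 := ne_of_gt (binomPMF_pos hs (by omega))
      field_simp
      ring
    rw [Finset.sum_congr rfl hterms]
    rw [Finset.sum_add_distrib, Finset.sum_sub_distrib, hsum_p2q]
    have h1 : ∑ k ∈ range (m+2), binomPMF (m+1) s k = 1 := sum_binomPMF (m+1) s
    have h2 : ∑ k ∈ range (m+2), 2 * binomPMF m s k = 2 := by
      rw [← Finset.mul_sum, Finset.sum_range_succ, binomPMF_zero s (by omega),
        add_zero, sum_binomPMF]
      norm_num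
    rw [h1, h2]
    have hne : ((m:ℝ)+1)*(1-s) ≠ 0 := by positivity
    field_simp
    ring
  -- Cauchy–Schwarz (Sedrakyan's lemma)
  have hCS : (∑ k ∈ range (m+2), |binomPMF (m+1) s k - binomPMF m s k|)^2
      ≤ s / (((m:ℝ)+1)*(1-s)) := by
    have h := Finset.sq_sum_div_le_sum_sq_div (range (m+2))
      (fun k => |binomPMF (m+1) s k - binomPMF m s k|)
      (g := fun k => binomPMF (m+1) s k)
      (fun k hk => binomPMF_pos hs (by rw [Finset.mem_range] at hk; omega))
    simp only [sq_abs] at h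
    rw [sum_binomPMF (m+1) s, div_one] at h
    calc (∑ k ∈ range (m+2), |binomPMF (m+1) s k - binomPMF m s k|)^2
        ≤ ∑ k ∈ range (m+2),
            (binomPMF (m+1) s k - binomPMF m s k)^2 / binomPMF (m+1) s k := h
      _ = s / (((m:ℝ)+1)*(1-s)) := hchi
  have hApos : 0 ≤ ∑ k ∈ range (m+2), |binomPMF (m+1) s k - binomPMF m s k| :=
    Finset.sum_nonneg fun k _ => abs_nonneg _
  have hAle : ∑ k ∈ range (m+2), |binomPMF (m+1) s k - binomPMF m s k|
      ≤ Real.sqrt (s / (((m:ℝ)+1)*(1-s))) := by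
    calc ∑ k ∈ range (m+2), |binomPMF (m+1) s k - binomPMF m s k|
        = Real.sqrt ((∑ k ∈ range (m+2), |binomPMF (m+1) s k - binomPMF m s k|)^2) :=
          (Real.sqrt_sq hApos).symm
      _ ≤ Real.sqrt (s / (((m:ℝ)+1)*(1-s))) := Real.sqrt_le_sqrt hCS
  have hsqrt : Real.sqrt (s / (4 * (((m:ℕ)+1:ℕ):ℝ) * (1 - s)))
      = (1/2) * Real.sqrt (s / (((m:ℝ)+1)*(1-s))) := by
    rw [show s / (4 * (((m:ℕ)+1:ℕ):ℝ) * (1-s)) = (1/2)^2 * (s / (((m:ℝ)+1)*(1-s))) by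
      push_cast; field_simp; ring]
    rw [Real.sqrt_mul (by positivity), Real.sqrt_sq (by norm_num)]
  push_cast at hsqrt ⊢
  rw [hsqrt]
  linarith
end

section
/- If μ and ν are probability measures on a countable set with Hellinger distance d_H(μ, ν) ≤ 1/2, then for every m ≥ 1/(4·d_H(μ, ν)²), 1 − d_TV(μ^m, ν^m) ≥ exp(−9·m·d_H(μ, ν)²). -/
/-- Total variation distance between measures on a countable set. -/
noncomputable def dTV {X : Type*} (μ ν : X → ℝ) : ℝ :=
  (1 / 2) * ∑' x, |μ x - ν x|

/-- Hellinger distance between measures on a countable set. -/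
noncomputable def dH {X : Type*} (μ ν : X → ℝ) : ℝ :=
  Real.sqrt (∑' x, (Real.sqrt (μ x) - Real.sqrt (ν x)) ^ 2)

open Real

lemma aux_sqrt_prod {ι : Type*} (s : Finset ι) (h : ι → ℝ) (h0 : ∀ i, 0 ≤ h i) :
    ∏ i ∈ s, Real.sqrt (h i) = Real.sqrt (∏ i ∈ s, h i) := by
  induction s using Finset.cons_induction with
  | empty => simp
  | cons a s ha ih => rw [Finset.prod_cons, Finset.prod_cons, ih, Real.sqrt_mul (h0 a)]

set_option maxHeartbeats 1000000 in
lemma aux_hasSum_pi_prod {X : Type*} (g : X → ℝ) (a : ℝ) (hg : HasSum g a)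
    (hg0 : ∀ x, 0 ≤ g x) (m : ℕ) :
    HasSum (fun f : Fin m → X => ∏ i, g (f i)) (a ^ m) := by
  induction m with
  | zero =>
      have : HasSum (fun _ : Fin 0 → X => (1 : ℝ)) 1 := hasSum_unique _
      simpa using this
  | succ m ih =>
      have hsummul : Summable (fun p : X × (Fin m → X) => g p.1 * ∏ i, g (p.2 i)) :=
        Summable.mul_of_nonneg (f := g) (g := fun f : Fin m → X => ∏ i, g (f i))
          hg.summable ih.summable hg0
          (fun f => Finset.prod_nonneg fun i _ => hg0 _)
      obtain ⟨u, hu⟩ := hsummul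
      have heq : a * a ^ m = u := HasSum.mul_eq hg ih hu
      have h2 : HasSum (fun p : X × (Fin m → X) => g p.1 * ∏ i, g (p.2 i)) (a * a ^ m) :=
        heq ▸ hu
      have key : (fun f : Fin (m + 1) → X => ∏ i, g (f i)) ∘
          (Fin.consEquiv fun _ : Fin (m + 1) => X) =
          fun p : X × (Fin m → X) => g p.1 * ∏ i, g (p.2 i) := by
        funext p
        simp [Fin.prod_univ_succ]
      have h3 := ((Fin.consEquiv fun _ : Fin (m + 1) => X).hasSum_iff).mp (key ▸ h2)
      rw [pow_succ']
      exact h3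

/-- Le Cam's inequality: the squared Bhattacharyya coefficient is at most twice
the sum of the pointwise minima. -/
lemma aux_lecam {Y : Type*} (p q : Y → ℝ)
    (hp0 : ∀ y, 0 ≤ p y) (hq0 : ∀ y, 0 ≤ q y)
    (hp1 : HasSum p 1) (hq1 : HasSum q 1) :
    (∑' y, Real.sqrt (p y * q y)) ^ 2 ≤ 2 * ∑' y, min (p y) (q y) := by
  have hmin : Summable fun y => min (p y) (q y) :=
    Summable.of_nonneg_of_le (fun y => le_min (hp0 y) (hq0 y))
      (fun y => min_le_left _ _) hp1.summable
  have hmax : Summable fun y => max (p y) (q y) :=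
    Summable.of_nonneg_of_le (fun y => le_trans (hp0 y) (le_max_left _ _))
      (fun y => max_le (by linarith [hq0 y]) (by linarith [hp0 y]))
      (hp1.summable.add hq1.summable)
  have hmaxle2 : ∑' y, max (p y) (q y) ≤ 2 := by
    have h2 : HasSum (fun y => p y + q y) 2 :=
      (by norm_num : (1:ℝ)+1 = 2) ▸ hp1.add hq1
    calc ∑' y, max (p y) (q y) ≤ ∑' y, (p y + q y) :=
          Summable.tsum_le_tsum (fun y => max_le (by linarith [hq0 y]) (by linarith [hp0 y]))
            hmax h2.summable
      _ = 2 := h2.tsum_eq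
  have hmin0 : 0 ≤ ∑' y, min (p y) (q y) :=
    tsum_nonneg fun y => le_min (hp0 y) (hq0 y)
  have hsqs : Summable fun y => Real.sqrt (p y * q y) := by
    refine Summable.of_nonneg_of_le (fun y => Real.sqrt_nonneg _) (fun y => ?_) hmax
    have : p y * q y ≤ max (p y) (q y) ^ 2 := by
      rcases le_total (p y) (q y) with h | h
      · rw [max_eq_right h]; nlinarith [hp0 y, hq0 y]
      · rw [max_eq_left h]; nlinarith [hp0 y, hq0 y]
    calc Real.sqrt (p y * q y) ≤ Real.sqrt (max (p y) (q y) ^ 2) := Real.sqrt_le_sqrt this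
      _ = max (p y) (q y) := Real.sqrt_sq (le_trans (hp0 y) (le_max_left _ _))
  have key : ∑' y, Real.sqrt (p y * q y) ≤
      Real.sqrt (∑' y, min (p y) (q y)) * Real.sqrt (∑' y, max (p y) (q y)) := by
    refine Summable.tsum_le_of_sum_le hsqs fun s => ?_
    have h1 : ∀ y ∈ s, Real.sqrt (p y * q y) =
        Real.sqrt (min (p y) (q y)) * Real.sqrt (max (p y) (q y)) := by
      intro y _
      rw [← Real.sqrt_mul (le_min (hp0 y) (hq0 y)), min_mul_max]
    rw [Finset.sum_congr rfl h1]
    calc ∑ y ∈ s, Real.sqrt (min (p y) (q y)) * Real.sqrt (max (p y) (q y))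
        ≤ Real.sqrt (∑ y ∈ s, min (p y) (q y)) * Real.sqrt (∑ y ∈ s, max (p y) (q y)) :=
          Real.sum_sqrt_mul_sqrt_le s (fun y => le_min (hp0 y) (hq0 y))
            (fun y => le_trans (hp0 y) (le_max_left _ _))
      _ ≤ Real.sqrt (∑' y, min (p y) (q y)) * Real.sqrt (∑' y, max (p y) (q y)) := by
          gcongr
          · exact Summable.sum_le_tsum s (fun y _ => le_min (hp0 y) (hq0 y)) hmin
          · exact Summable.sum_le_tsum s (fun y _ => le_trans (hp0 y) (le_max_left _ _)) hmax
  have hB0 : 0 ≤ ∑' y, Real.sqrt (p y * q y) := tsum_nonneg fun y => Real.sqrt_nonneg _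
  have hmax0 : 0 ≤ ∑' y, max (p y) (q y) :=
    tsum_nonneg fun y => le_trans (hp0 y) (le_max_left _ _)
  calc (∑' y, Real.sqrt (p y * q y)) ^ 2
      ≤ (Real.sqrt (∑' y, min (p y) (q y)) * Real.sqrt (∑' y, max (p y) (q y))) ^ 2 := by
        apply pow_le_pow_left₀ hB0 key
    _ = (∑' y, min (p y) (q y)) * (∑' y, max (p y) (q y)) := by
        rw [mul_pow, Real.sq_sqrt hmin0, Real.sq_sqrt hmax0]
    _ ≤ (∑' y, min (p y) (q y)) * 2 := by
        exact mul_le_mul_of_nonneg_left hmaxle2 hmin0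
    _ = 2 * ∑' y, min (p y) (q y) := by ring

/-- `1 - dTV` equals the sum of pointwise minima. -/
lemma aux_one_sub_dTV {Y : Type*} (p q : Y → ℝ)
    (hp0 : ∀ y, 0 ≤ p y) (hq0 : ∀ y, 0 ≤ q y)
    (hp1 : HasSum p 1) (hq1 : HasSum q 1) :
    1 - dTV p q = ∑' y, min (p y) (q y) := by
  have hmin : Summable fun y => min (p y) (q y) :=
    Summable.of_nonneg_of_le (fun y => le_min (hp0 y) (hq0 y))
      (fun y => min_le_left _ _) hp1.summable
  have hadd : HasSum (fun y => p y + q y) 2 := (by norm_num : (1:ℝ)+1 = 2) ▸ hp1.add hq1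
  have habs : ∀ y, |p y - q y| = (p y + q y) - 2 * min (p y) (q y) := by
    intro y
    rcases le_total (p y) (q y) with h | h
    · rw [abs_of_nonpos (by linarith), min_eq_left h]; ring
    · rw [abs_of_nonneg (by linarith), min_eq_right h]; ring
  have hsum : ∑' y, |p y - q y| = 2 - 2 * ∑' y, min (p y) (q y) := by
    calc ∑' y, |p y - q y| = ∑' y, ((p y + q y) - 2 * min (p y) (q y)) := by
          exact tsum_congr habs
      _ = (∑' y, (p y + q y)) - ∑' y, (2 * min (p y) (q y)) :=
          Summable.tsum_sub hadd.summable (hmin.mul_left 2)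
      _ = 2 - 2 * ∑' y, min (p y) (q y) := by
          rw [hadd.tsum_eq, tsum_mul_left]
  rw [dTV, hsum]; ring

theorem one_sub_tv_power_ge_of_hellinger
    {X : Type*} [Countable X] (μ ν : X → ℝ)
    (hμ0 : ∀ x, 0 ≤ μ x) (hν0 : ∀ x, 0 ≤ ν x)
    (hμ1 : HasSum μ 1) (hν1 : HasSum ν 1)
    (hpos : 0 < dH μ ν) (hle : dH μ ν ≤ 1 / 2)
    (m : ℕ) (hm : 1 / (4 * dH μ ν ^ 2) ≤ (m : ℝ)) :
    1 - dTV (fun x : Fin m → X => ∏ i, μ (x i))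
            (fun x : Fin m → X => ∏ i, ν (x i))
      ≥ Real.exp (-(9 * m * dH μ ν ^ 2)) := by
  set h := dH μ ν with hh
  -- basic facts about h
  have hh2pos : 0 < h ^ 2 := by positivity
  have hh2le : h ^ 2 ≤ 1 / 4 := by nlinarith
  have hmh2 : 1 / 4 ≤ (m : ℝ) * h ^ 2 := by
    rw [div_le_iff₀ (by positivity)] at hm
    nlinarith
  -- the Bhattacharyya coefficient
  set ρ := ∑' x, Real.sqrt (μ x * ν x) with hρ
  have hρsummand : ∀ x, Real.sqrt (μ x * ν x) = Real.sqrt (μ x) * Real.sqrt (ν x) :=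
    fun x => Real.sqrt_mul (hμ0 x) _
  have hρsum : Summable fun x => Real.sqrt (μ x * ν x) := by
    refine Summable.of_nonneg_of_le (fun x => Real.sqrt_nonneg _) (fun x => ?_)
      (hμ1.summable.add hν1.summable)
    rw [hρsummand x]
    nlinarith [Real.sq_sqrt (hμ0 x), Real.sq_sqrt (hν0 x), Real.sqrt_nonneg (μ x),
      Real.sqrt_nonneg (ν x), sq_nonneg (Real.sqrt (μ x) - Real.sqrt (ν x))]
  -- h² = 2 - 2ρ
  have hsummand : ∀ x, (Real.sqrt (μ x) - Real.sqrt (ν x)) ^ 2 =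
      (μ x + ν x) - 2 * Real.sqrt (μ x * ν x) := by
    intro x
    rw [sub_sq, Real.sq_sqrt (hμ0 x), Real.sq_sqrt (hν0 x), hρsummand x]
    ring
  have hadd : HasSum (fun x => μ x + ν x) 2 := (by norm_num : (1:ℝ)+1 = 2) ▸ hμ1.add hν1
  have hHsq : h ^ 2 = 2 - 2 * ρ := by
    have h0 : 0 ≤ ∑' x, (Real.sqrt (μ x) - Real.sqrt (ν x)) ^ 2 :=
      tsum_nonneg fun x => sq_nonneg _
    rw [hh, dH, Real.sq_sqrt h0]
    calc ∑' x, (Real.sqrt (μ x) - Real.sqrt (ν x)) ^ 2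
        = ∑' x, ((μ x + ν x) - 2 * Real.sqrt (μ x * ν x)) := tsum_congr hsummand
      _ = (∑' x, (μ x + ν x)) - ∑' x, (2 * Real.sqrt (μ x * ν x)) :=
          Summable.tsum_sub hadd.summable (hρsum.mul_left 2)
      _ = 2 - 2 * ρ := by rw [hadd.tsum_eq, tsum_mul_left]
  have hρval : ρ = 1 - h ^ 2 / 2 := by linarith
  have hρge : (7 : ℝ) / 8 ≤ ρ := by nlinarith
  -- product measures
  set P := fun f : Fin m → X => ∏ i, μ (f i) with hP
  set Q := fun f : Fin m → X => ∏ i, ν (f i) with hQ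
  have hP0 : ∀ f, 0 ≤ P f := fun f => Finset.prod_nonneg fun i _ => hμ0 _
  have hQ0 : ∀ f, 0 ≤ Q f := fun f => Finset.prod_nonneg fun i _ => hν0 _
  have hP1 : HasSum P 1 := by simpa using aux_hasSum_pi_prod μ 1 hμ1 hμ0 m
  have hQ1 : HasSum Q 1 := by simpa using aux_hasSum_pi_prod ν 1 hν1 hν0 m
  -- Bhattacharyya coefficient of the products
  have hBC : ∑' f : Fin m → X, Real.sqrt (P f * Q f) = ρ ^ m := by
    have hs : ∀ f : Fin m → X, Real.sqrt (P f * Q f) =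
        ∏ i, Real.sqrt (μ (f i) * ν (f i)) := by
      intro f
      rw [hP, hQ, aux_sqrt_prod Finset.univ (fun i => μ (f i) * ν (f i))
        (fun i => mul_nonneg (hμ0 _) (hν0 _)), ← Finset.prod_mul_distrib]
    rw [tsum_congr hs]
    exact (aux_hasSum_pi_prod (fun x => Real.sqrt (μ x * ν x)) ρ hρsum.hasSum
      (fun x => Real.sqrt_nonneg _) m).tsum_eq
  -- Le Cam on the products
  have hlecam := aux_lecam P Q hP0 hQ0 hP1 hQ1
  rw [hBC, ← pow_mul] at hlecam
  have hTVmin := aux_one_sub_dTV P Q hP0 hQ0 hP1 hQ1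
  rw [hP, hQ] at hTVmin
  rw [ge_iff_le, hTVmin]
  -- now a numeric estimate:  exp(-(9 m h²)) ≤ ρ^(2m) / 2 ≤ ∑' min
  have step1 : Real.exp (-(4 / 7 * h ^ 2)) ≤ ρ := by
    have e1 : 1 + 4 / 7 * h ^ 2 ≤ Real.exp (4 / 7 * h ^ 2) := by
      linarith [Real.add_one_le_exp (4 / 7 * h ^ 2)]
    have e2 : (0 : ℝ) < 1 + 4 / 7 * h ^ 2 := by positivity
    rw [Real.exp_neg]
    calc (Real.exp (4 / 7 * h ^ 2))⁻¹ ≤ (1 + 4 / 7 * h ^ 2)⁻¹ := by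
          apply inv_anti₀ e2 e1
      _ ≤ ρ := by
          rw [inv_le_iff_one_le_mul₀ e2]
          nlinarith
  have step2 : Real.exp (-(8 / 7 * (m * h ^ 2))) ≤ ρ ^ (m * 2) := by
    calc Real.exp (-(8 / 7 * (m * h ^ 2)))
        = Real.exp (-(4 / 7 * h ^ 2)) ^ (m * 2) := by
          rw [← Real.exp_nat_mul]
          congr 1
          push_cast
          ring
      _ ≤ ρ ^ (m * 2) := pow_le_pow_left₀ (Real.exp_pos _).le step1 _
  have step3 : Real.exp (-(9 * m * h ^ 2)) ≤ Real.exp (-(8 / 7 * (m * h ^ 2))) / 2 := by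
    have key : (2 : ℝ) ≤ Real.exp (55 / 7 * (m * h ^ 2)) := by
      have := Real.add_one_le_exp (55 / 7 * ((m : ℝ) * h ^ 2))
      nlinarith
    rw [le_div_iff₀ (by norm_num : (0:ℝ) < 2)]
    calc Real.exp (-(9 * m * h ^ 2)) * 2
        ≤ Real.exp (-(9 * m * h ^ 2)) * Real.exp (55 / 7 * (m * h ^ 2)) :=
          mul_le_mul_of_nonneg_left key (Real.exp_pos _).le
      _ = Real.exp (-(9 * ↑m * h ^ 2) + 55 / 7 * (↑m * h ^ 2)) := (Real.exp_add _ _).symm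
      _ = Real.exp (-(8 / 7 * (↑m * h ^ 2))) := by congr 1; ring
  calc Real.exp (-(9 * m * h ^ 2)) ≤ Real.exp (-(8 / 7 * (m * h ^ 2))) / 2 := step3
    _ ≤ ρ ^ (m * 2) / 2 := by linarith
    _ ≤ ∑' f : Fin m → X, min (∏ i, μ (f i)) (∏ i, ν (f i)) := by
        rw [div_le_iff₀ (by norm_num)]
        calc ρ ^ (m * 2) ≤ 2 * ∑' f : Fin m → X, min (P f) (Q f) := hlecam
          _ = (∑' f : Fin m → X, min (∏ i, μ (f i)) (∏ i, ν (f i))) * 2 := by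
              rw [hP, hQ]; ring
end

section
/- Let X and Y be discrete real-valued random variables such that for all r > 0, P[|X| > r] ≤ 2·exp(−r²) and P[|Y| > r] ≤ 2·exp(−r²). Then |E[X] − E[Y]| ≤ 4·δ·sqrt(log(2/δ)), where δ = d_TV(X, Y) (assumed positive). -/
open scoped Classical

lemma aux_layer (d : ℝ → ℝ) (h : ℝ) (hh : 0 < h)
    (hd0 : ∀ x, 0 ≤ d x)
    (hite : ∀ n : ℕ, Summable (fun x => if (n : ℝ) * h < |x| then d x else 0))
    (hg : Summable (fun x : ℝ => |x| * d x))
    (hT : Summable (fun n : ℕ => ∑' x, (if (n : ℝ) * h < |x| then d x else 0))) :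
    ∑' x, |x| * d x ≤ h * ∑' n : ℕ, ∑' x, (if (n : ℝ) * h < |x| then d x else 0) := by
  classical
  set F : ℕ → ℝ → ENNReal :=
    fun n x => ENNReal.ofReal (if (n : ℝ) * h < |x| then h * d x else 0) with hFdef
  have claim1 : ∀ x : ℝ, ENNReal.ofReal (|x| * d x) ≤ ∑' n, F n x := by
    intro x
    set m : ℕ := ⌈|x| / h⌉₊ with hmdef
    have hcond : ∀ n : ℕ, ((n : ℝ) * h < |x| ↔ n < m) := by
      intro n
      rw [hmdef, Nat.lt_ceil, lt_div_iff₀ hh]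
    have hsupp : ∀ n ∉ Finset.range m, F n x = 0 := by
      intro n hn
      rw [Finset.mem_range] at hn
      rw [hFdef]
      dsimp only
      rw [if_neg (fun hc => hn ((hcond n).mp hc))]
      exact ENNReal.ofReal_zero
    rw [tsum_eq_sum hsupp]
    have hterm : ∀ n ∈ Finset.range m, F n x = ENNReal.ofReal (h * d x) := by
      intro n hn
      rw [Finset.mem_range] at hn
      rw [hFdef]
      dsimp only
      rw [if_pos ((hcond n).mpr hn)]
    rw [Finset.sum_congr rfl hterm, Finset.sum_const, Finset.card_range]
    rw [nsmul_eq_mul, ← ENNReal.ofReal_natCast, ← ENNReal.ofReal_mul (Nat.cast_nonneg m)]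
    apply ENNReal.ofReal_le_ofReal
    have hxm : |x| ≤ (m : ℝ) * h := by
      have h1 : |x| / h ≤ (m : ℝ) := Nat.le_ceil _
      calc |x| = |x| / h * h := by field_simp
      _ ≤ (m : ℝ) * h := mul_le_mul_of_nonneg_right h1 (le_of_lt hh)
    calc |x| * d x ≤ ((m : ℝ) * h) * d x :=
      mul_le_mul_of_nonneg_right hxm (hd0 x)
    _ = (m : ℝ) * (h * d x) := by ring
  have claim3 : ∀ n : ℕ, ∑' x, F n x
      = ENNReal.ofReal (h * ∑' x, (if (n : ℝ) * h < |x| then d x else 0)) := by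
    intro n
    have heq : ∀ x : ℝ, F n x
        = ENNReal.ofReal (h * (if (n : ℝ) * h < |x| then d x else 0)) := by
      intro x
      rw [hFdef]
      dsimp only
      split_ifs
      · rfl
      · rw [mul_zero]
    calc ∑' x, F n x
        = ∑' x, ENNReal.ofReal (h * (if (n : ℝ) * h < |x| then d x else 0)) :=
          tsum_congr heq
    _ = ENNReal.ofReal (∑' x, h * (if (n : ℝ) * h < |x| then d x else 0)) := by
          rw [ENNReal.ofReal_tsum_of_nonneg]
          · intro x; split_ifs with hx
            · have := hd0 x; positivity
            · rw [mul_zero]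
          · exact (hite n).mul_left h
    _ = ENNReal.ofReal (h * ∑' x, (if (n : ℝ) * h < |x| then d x else 0)) := by
          rw [tsum_mul_left]
  have hTnn : ∀ n : ℕ, 0 ≤ ∑' x, (if (n : ℝ) * h < |x| then d x else 0) := by
    intro n
    apply tsum_nonneg
    intro x; split_ifs
    · exact hd0 x
    · exact le_refl 0
  have hmain : ENNReal.ofReal (∑' x, |x| * d x)
      ≤ ENNReal.ofReal (h * ∑' n : ℕ, ∑' x, (if (n : ℝ) * h < |x| then d x else 0)) := by
    calc ENNReal.ofReal (∑' x, |x| * d x)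
        = ∑' x, ENNReal.ofReal (|x| * d x) :=
          ENNReal.ofReal_tsum_of_nonneg (fun x => mul_nonneg (abs_nonneg x) (hd0 x)) hg
    _ ≤ ∑' (x : ℝ) (n : ℕ), F n x := ENNReal.tsum_le_tsum claim1
    _ = ∑' (n : ℕ) (x : ℝ), F n x := ENNReal.tsum_comm
    _ = ∑' n : ℕ, ENNReal.ofReal (h * ∑' x, (if (n : ℝ) * h < |x| then d x else 0)) :=
          tsum_congr claim3
    _ = ENNReal.ofReal (∑' n : ℕ, h * ∑' x, (if (n : ℝ) * h < |x| then d x else 0)) :=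
          (ENNReal.ofReal_tsum_of_nonneg
            (fun n => mul_nonneg (le_of_lt hh) (hTnn n)) (hT.mul_left h)).symm
    _ = ENNReal.ofReal (h * ∑' n : ℕ, ∑' x, (if (n : ℝ) * h < |x| then d x else 0)) := by
          rw [tsum_mul_left]
  have hrhs_nonneg : 0 ≤ h * ∑' n : ℕ, ∑' x, (if (n : ℝ) * h < |x| then d x else 0) :=
    mul_nonneg (le_of_lt hh) (tsum_nonneg hTnn)
  exact (ENNReal.ofReal_le_ofReal_iff hrhs_nonneg).mp hmain

set_option maxHeartbeats 2000000 in
theorem mean_diff_le_of_tails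
    (μ ν : ℝ → ℝ)
    (hμ0 : ∀ x, 0 ≤ μ x) (hν0 : ∀ x, 0 ≤ ν x)
    (hμ1 : HasSum μ 1) (hν1 : HasSum ν 1)
    (hμint : Summable (fun x => x * μ x)) (hνint : Summable (fun x => x * ν x))
    (hμtail : ∀ r : ℝ, 0 < r → ∑' x, (if r < |x| then μ x else 0) ≤ 2 * Real.exp (-r ^ 2))
    (hνtail : ∀ r : ℝ, 0 < r → ∑' x, (if r < |x| then ν x else 0) ≤ 2 * Real.exp (-r ^ 2))
    (hδ : 0 < dTV μ ν) :
    |(∑' x, x * μ x) - ∑' x, x * ν x|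
      ≤ 4 * dTV μ ν * Real.sqrt (Real.log (2 / dTV μ ν)) := by
  classical
  set δ := dTV μ ν with hδdef
  -- basic facts about d x = |μ x - ν x|
  have hd0 : ∀ x, 0 ≤ |μ x - ν x| := fun x => abs_nonneg _
  have hdsummable : Summable (fun x => |μ x - ν x|) :=
    (hμ1.summable.sub hν1.summable).abs
  have hsum_d : ∑' x, |μ x - ν x| = 2 * δ := by
    have : δ = (1 / 2) * ∑' x, |μ x - ν x| := hδdef
    linarith
  have hdle : ∀ x, |μ x - ν x| ≤ μ x + ν x := by
    intro x
    calc |μ x - ν x| ≤ |μ x| + |ν x| := abs_sub _ _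
    _ = μ x + ν x := by rw [abs_of_nonneg (hμ0 x), abs_of_nonneg (hν0 x)]
  have hδ1 : δ ≤ 1 := by
    have h2 : ∑' x, |μ x - ν x| ≤ ∑' x, (μ x + ν x) :=
      Summable.tsum_le_tsum hdle hdsummable (hμ1.summable.add hν1.summable)
    rw [hsum_d, Summable.tsum_add hμ1.summable hν1.summable, hμ1.tsum_eq, hν1.tsum_eq] at h2
    linarith
  -- logarithm and r
  have hlog_eq : Real.log (2 / δ) = Real.log 2 - Real.log δ :=
    Real.log_div two_ne_zero (ne_of_gt hδ)
  have hlogδ : Real.log δ ≤ 0 := Real.log_nonpos (le_of_lt hδ) hδ1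
  have hlog2 : (0.6931471803 : ℝ) < Real.log 2 := Real.log_two_gt_d9
  have hlogge : (0.6931471803 : ℝ) ≤ Real.log (2 / δ) := by
    rw [hlog_eq]; linarith
  have hlogpos : 0 < Real.log (2 / δ) := by linarith
  set r := Real.sqrt (Real.log (2 / δ)) with hrdef
  have hrpos : 0 < r := Real.sqrt_pos.mpr hlogpos
  have hr2 : r ^ 2 = Real.log (2 / δ) := Real.sq_sqrt (le_of_lt hlogpos)
  have hr2ge : (0.6931471803 : ℝ) ≤ r ^ 2 := by rw [hr2]; exact hlogge
  have her : Real.exp (-r ^ 2) = δ / 2 := by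
    rw [hr2]
    have h1 : -Real.log (2 / δ) = Real.log (δ / 2) := by
      rw [← Real.log_inv]
      congr 1
      rw [inv_div]
    rw [h1, Real.exp_log (by positivity)]
  -- shell width h
  set h : ℝ := 1 / (16 * r) with hhdef
  have hhpos : 0 < h := by positivity
  have hrh : 2 * r * h = 1 / 8 := by
    rw [hhdef]; field_simp; ring
  -- N: number of "small" shells
  set N : ℕ := ⌈r / h⌉₊ with hNdef
  have hN1 : 1 ≤ N := Nat.one_le_iff_ne_zero.mpr (by
    rw [hNdef]
    exact Nat.ceil_pos.mpr (by positivity) |>.ne')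
  have hNh_ge : r ≤ (N : ℝ) * h := by
    have := Nat.le_ceil (r / h)
    calc r = r / h * h := by field_simp
    _ ≤ (N : ℝ) * h := by
      apply mul_le_mul_of_nonneg_right _ (le_of_lt hhpos)
      exact this
  have hNh_le : (N : ℝ) * h ≤ r + h := by
    have := Nat.ceil_lt_add_one (a := r / h) (by positivity)
    have h2 : (N : ℝ) ≤ r / h + 1 := le_of_lt this
    calc (N : ℝ) * h ≤ (r / h + 1) * h :=
      mul_le_mul_of_nonneg_right h2 (le_of_lt hhpos)
    _ = r + h := by field_simp
  -- truncated sums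
  set T : ℕ → ℝ := fun n => ∑' x, (if (n : ℝ) * h < |x| then |μ x - ν x| else 0) with hTdef
  set q : ℝ := Real.exp (-(1 / 8)) with hqdef
  have hq0 : 0 ≤ q := le_of_lt (Real.exp_pos _)
  have hq89 : q ≤ 8 / 9 := by
    have h1 : (9 : ℝ) / 8 ≤ Real.exp (1 / 8) := by
      have := Real.add_one_le_exp (1 / 8 : ℝ)
      linarith
    have h2 : Real.exp (-(1 / 8 : ℝ)) = (Real.exp (1 / 8))⁻¹ := Real.exp_neg _
    rw [hqdef, h2]
    rw [inv_le_comm₀ (Real.exp_pos _) (by norm_num)]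
    calc (8 / 9 : ℝ)⁻¹ = 9 / 8 := by norm_num
    _ ≤ Real.exp (1 / 8) := h1
  have hq1 : q < 1 := lt_of_le_of_lt hq89 (by norm_num)
  -- the "cap" sequence
  set c : ℕ → ℝ := fun n => if n < N then 2 * δ else 4 * Real.exp (-((n : ℝ) * h) ^ 2)
    with hcdef
  have hc0 : ∀ n, 0 ≤ c n := by
    intro n
    rw [hcdef]
    dsimp only
    split_ifs
    · linarith
    · positivity
  -- geometric bound for the tail of c
  have hshell_ge : ∀ i : ℕ, r ^ 2 + (i : ℝ) * (1 / 8) ≤ (((i + N : ℕ) : ℝ) * h) ^ 2 := by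
    intro i
    have hcast : ((i + N : ℕ) : ℝ) = (i : ℝ) + (N : ℝ) := by push_cast; ring
    rw [hcast]
    have h1 : r ≤ (N : ℝ) * h := hNh_ge
    have h2 : (0 : ℝ) ≤ (i : ℝ) * h := by positivity
    have h3 : ((i : ℝ) + (N : ℝ)) * h = (i : ℝ) * h + (N : ℝ) * h := by ring
    rw [h3]
    have h4 : ((i : ℝ) * h + (N : ℝ) * h) ^ 2
        = ((N : ℝ) * h) ^ 2 + 2 * ((N : ℝ) * h) * ((i : ℝ) * h) + ((i : ℝ) * h) ^ 2 := by
      ring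
    have h5 : r ^ 2 ≤ ((N : ℝ) * h) ^ 2 := by
      apply pow_le_pow_left₀ (le_of_lt hrpos) h1
    have h6 : (i : ℝ) * (1 / 8) = (i : ℝ) * (2 * r * h) := by rw [hrh]
    nlinarith [sq_nonneg ((i : ℝ) * h), mul_le_mul_of_nonneg_right h1 h2]
  have hcgeom : ∀ i : ℕ, c (i + N) ≤ 4 * Real.exp (-r ^ 2) * q ^ i := by
    intro i
    have hiN : ¬ (i + N < N) := by omega
    rw [hcdef]
    dsimp only
    rw [if_neg hiN]
    have h1 : Real.exp (-(((i + N : ℕ) : ℝ) * h) ^ 2)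
        ≤ Real.exp (-(r ^ 2 + (i : ℝ) * (1 / 8))) := by
      apply Real.exp_le_exp.mpr
      have := hshell_ge i
      linarith
    have h2 : Real.exp (-(r ^ 2 + (i : ℝ) * (1 / 8)))
        = Real.exp (-r ^ 2) * q ^ i := by
      rw [hqdef]
      rw [show -(r ^ 2 + (i : ℝ) * (1 / 8)) = -r ^ 2 + (i : ℝ) * (-(1 / 8)) by ring]
      rw [Real.exp_add, Real.exp_nat_mul]
    calc 4 * Real.exp (-(((i + N : ℕ) : ℝ) * h) ^ 2)
        ≤ 4 * Real.exp (-(r ^ 2 + (i : ℝ) * (1 / 8))) := by linarith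
    _ = 4 * Real.exp (-r ^ 2) * q ^ i := by rw [h2]; ring
  have hgeom_summable : Summable (fun i : ℕ => 4 * Real.exp (-r ^ 2) * q ^ i) :=
    (summable_geometric_of_lt_one hq0 hq1).mul_left _
  have hcshift_summable : Summable (fun i : ℕ => c (i + N)) :=
    Summable.of_nonneg_of_le (fun i => hc0 _) hcgeom hgeom_summable
  have hcsummable : Summable c := (summable_nat_add_iff N).mp hcshift_summable
  -- summability facts
  have hite_d_summable : ∀ n : ℕ,
      Summable (fun x => if (n : ℝ) * h < |x| then |μ x - ν x| else 0) := by
    intro n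
    apply Summable.of_nonneg_of_le _ _ hdsummable
    · intro x; split_ifs
      · exact hd0 x
      · exact le_refl 0
    · intro x; split_ifs
      · exact le_refl _
      · exact hd0 x
  have hite_μ_summable : ∀ n : ℕ,
      Summable (fun x => if (n : ℝ) * h < |x| then μ x else 0) := by
    intro n
    apply Summable.of_nonneg_of_le _ _ hμ1.summable
    · intro x; split_ifs with hx
      · exact hμ0 x
      · exact le_refl 0
    · intro x; split_ifs
      · exact le_refl _
      · exact hμ0 x
  have hite_ν_summable : ∀ n : ℕ,
      Summable (fun x => if (n : ℝ) * h < |x| then ν x else 0) := by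
    intro n
    apply Summable.of_nonneg_of_le _ _ hν1.summable
    · intro x; split_ifs with hx
      · exact hν0 x
      · exact le_refl 0
    · intro x; split_ifs
      · exact le_refl _
      · exact hν0 x
  -- bounds on T
  have hT_le_2δ : ∀ n : ℕ, T n ≤ 2 * δ := by
    intro n
    rw [hTdef]
    rw [← hsum_d]
    apply Summable.tsum_le_tsum _ (hite_d_summable n) hdsummable
    intro x; split_ifs
    · exact le_refl _
    · exact hd0 x
  have hT_tail : ∀ n : ℕ, N ≤ n → T n ≤ 4 * Real.exp (-((n : ℝ) * h) ^ 2) := by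
    intro n hn
    have hnh_pos : 0 < (n : ℝ) * h := by
      have : (1 : ℝ) ≤ (n : ℝ) := by
        have : 1 ≤ n := le_trans hN1 hn
        exact_mod_cast this
      nlinarith
    have hsplit : T n ≤ (∑' x, (if (n : ℝ) * h < |x| then μ x else 0))
        + ∑' x, (if (n : ℝ) * h < |x| then ν x else 0) := by
      rw [hTdef]
      rw [← Summable.tsum_add (hite_μ_summable n) (hite_ν_summable n)]
      apply Summable.tsum_le_tsum _ (hite_d_summable n) ((hite_μ_summable n).add (hite_ν_summable n))
      intro x
      split_ifs
      · exact hdle x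
      · simp
    have h1 := hμtail ((n : ℝ) * h) hnh_pos
    have h2 := hνtail ((n : ℝ) * h) hnh_pos
    calc T n ≤ _ := hsplit
    _ ≤ 2 * Real.exp (-((n : ℝ) * h) ^ 2) + 2 * Real.exp (-((n : ℝ) * h) ^ 2) := by
      exact add_le_add h1 h2
    _ = 4 * Real.exp (-((n : ℝ) * h) ^ 2) := by ring
  have hT_le_c : ∀ n : ℕ, T n ≤ c n := by
    intro n
    rw [hcdef]
    dsimp only
    split_ifs with hn
    · exact hT_le_2δ n
    · exact hT_tail n (le_of_not_gt hn)
  have hT0 : ∀ n, 0 ≤ T n := by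
    intro n
    rw [hTdef]
    apply tsum_nonneg
    intro x; split_ifs
    · exact hd0 x
    · exact le_refl 0
  -- summability of |x| * d x
  have hg_summable : Summable (fun x : ℝ => |x| * |μ x - ν x|) := by
    apply Summable.of_nonneg_of_le (fun x => by positivity)
      (fun x => ?_) (hμint.abs.add hνint.abs)
    have : |x| * |μ x - ν x| ≤ |x| * (μ x + ν x) :=
      mul_le_mul_of_nonneg_left (hdle x) (abs_nonneg x)
    calc |x| * |μ x - ν x| ≤ |x| * (μ x + ν x) := this
    _ = |x * μ x| + |x * ν x| := by
      rw [abs_mul, abs_mul, abs_of_nonneg (hμ0 x), abs_of_nonneg (hν0 x)]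
      ring
  -- Step A : the mean difference is at most ∑ |x| d x
  have hstepA : |(∑' x, x * μ x) - ∑' x, x * ν x| ≤ ∑' x, |x| * |μ x - ν x| := by
    rw [← Summable.tsum_sub hμint hνint]
    have habs : (fun x : ℝ => ‖x * μ x - x * ν x‖) = fun x => |x| * |μ x - ν x| := by
      funext x
      rw [Real.norm_eq_abs, ← mul_sub, abs_mul]
    have hns : Summable (fun x : ℝ => ‖x * μ x - x * ν x‖) := by
      rw [habs]; exact hg_summable
    have := norm_tsum_le_tsum_norm hns
    rw [Real.norm_eq_abs] at this
    rw [habs] at this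
    exact this
  -- Step B : layer-cake
  have hTsummable : Summable T :=
    Summable.of_nonneg_of_le hT0 hT_le_c hcsummable
  have hstepB : ∑' x, |x| * |μ x - ν x| ≤ h * ∑' n, c n := by
    have hlayer := aux_layer (fun x => |μ x - ν x|) h hhpos hd0 hite_d_summable
      hg_summable (by rw [hTdef] at hTsummable; exact hTsummable)
    have hTc : ∑' n : ℕ, ∑' x, (if (n : ℝ) * h < |x| then |μ x - ν x| else 0)
        ≤ ∑' n, c n := by
      apply Summable.tsum_le_tsum _ _ hcsummable
      · intro n
        have := hT_le_c n
        rw [hTdef] at this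
        exact this
      · rw [hTdef] at hTsummable; exact hTsummable
    calc ∑' x, |x| * |μ x - ν x|
        ≤ h * ∑' n : ℕ, ∑' x, (if (n : ℝ) * h < |x| then |μ x - ν x| else 0) := hlayer
    _ ≤ h * ∑' n, c n := mul_le_mul_of_nonneg_left hTc (le_of_lt hhpos)
  -- Step C : bound ∑ c
  have hstepC : ∑' n, c n ≤ (N : ℝ) * (2 * δ) + 4 * Real.exp (-r ^ 2) * (1 - q)⁻¹ := by
    have hsplit := Summable.sum_add_tsum_nat_add N hcsummable
    have hfirst : ∑ i ∈ Finset.range N, c i = (N : ℝ) * (2 * δ) := by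
      rw [Finset.sum_congr rfl (fun i hi => ?_), Finset.sum_const, Finset.card_range,
        nsmul_eq_mul]
      rw [Finset.mem_range] at hi
      rw [hcdef]
      dsimp only
      rw [if_pos hi]
    have hsecond : ∑' i : ℕ, c (i + N) ≤ 4 * Real.exp (-r ^ 2) * (1 - q)⁻¹ := by
      calc ∑' i : ℕ, c (i + N) ≤ ∑' i : ℕ, 4 * Real.exp (-r ^ 2) * q ^ i :=
        Summable.tsum_le_tsum hcgeom hcshift_summable hgeom_summable
      _ = 4 * Real.exp (-r ^ 2) * ∑' i : ℕ, q ^ i := tsum_mul_left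
      _ = 4 * Real.exp (-r ^ 2) * (1 - q)⁻¹ := by
          rw [tsum_geometric_of_lt_one hq0 hq1]
    linarith [hsplit, hfirst, hsecond]
  -- final arithmetic
  have hinv9 : (1 - q)⁻¹ ≤ 9 := by
    have h19 : (1 : ℝ) / 9 ≤ 1 - q := by linarith
    have h20 := inv_anti₀ (by norm_num : (0 : ℝ) < 1 / 9) h19
    norm_num at h20
    linarith
  have hfinal : h * ∑' n, c n ≤ 4 * δ * r := by
    have h1 : h * ∑' n, c n ≤ h * ((N : ℝ) * (2 * δ) + 4 * Real.exp (-r ^ 2) * (1 - q)⁻¹) :=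
      mul_le_mul_of_nonneg_left hstepC (le_of_lt hhpos)
    rw [her] at h1
    have h2 : h * ((N : ℝ) * (2 * δ) + 4 * (δ / 2) * (1 - q)⁻¹)
        ≤ (r + h) * (2 * δ) + 18 * δ * h := by
      have ha : h * ((N : ℝ) * (2 * δ)) = ((N : ℝ) * h) * (2 * δ) := by ring
      have hb : ((N : ℝ) * h) * (2 * δ) ≤ (r + h) * (2 * δ) :=
        mul_le_mul_of_nonneg_right hNh_le (by linarith)
      have hc' : h * (4 * (δ / 2) * (1 - q)⁻¹) = 2 * δ * h * (1 - q)⁻¹ := by ring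
      have hd' : 2 * δ * h * (1 - q)⁻¹ ≤ 2 * δ * h * 9 := by
        apply mul_le_mul_of_nonneg_left hinv9
        positivity
      nlinarith
    have h3 : (r + h) * (2 * δ) + 18 * δ * h = 2 * δ * r + 20 * δ * h := by ring
    have h4 : 20 * δ * h ≤ 2 * δ * r := by
      have hhr : h * (16 * r) = 1 := by rw [hhdef]; field_simp
      have h5 : 20 * h ≤ 2 * r := by nlinarith [hr2ge, hrpos, hhpos]
      nlinarith [hδ.le, h5, hhpos.le]
    calc h * ∑' n, c n ≤ h * ((N : ℝ) * (2 * δ) + 4 * (δ / 2) * (1 - q)⁻¹) := h1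
    _ ≤ (r + h) * (2 * δ) + 18 * δ * h := h2
    _ = 2 * δ * r + 20 * δ * h := h3
    _ ≤ 2 * δ * r + 2 * δ * r := by linarith
    _ = 4 * δ * r := by ring
  calc |(∑' x, x * μ x) - ∑' x, x * ν x| ≤ ∑' x, |x| * |μ x - ν x| := hstepA
  _ ≤ h * ∑' n, c n := hstepB
  _ ≤ 4 * δ * r := hfinal
end
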